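/- Let U be an integrable real-valued random variable taking values in L with g(U, τ(V)) integrable. Then almost everywhere, E[ g(U, τ(V)) ∥ σ(V) ] ≥ g( E[U ∥ σ(V)], τ(V) ), where E[· ∥ σ(V)] denotes conditional expectation given the σ-field generated by V. -/

import Mathlib

open MeasureTheory ProbabilityTheory Set

/-- Jensen's inequality for a convex function on an ord-connected subset of `ℝ`
(no closedness or continuity needed). -/
lemma jensen_ordConnected {α : Type*} [MeasurableSpace α] {μ : Measure α}
    [IsProbabilityMeasure μ] {s : Set ℝ} (hs : s.OrdConnected) {g : ℝ → ℝ}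
    (hg : ConvexOn ℝ s g) {f : α → ℝ} (hfs : ∀ᵐ x ∂μ, f x ∈ s)
    (hfi : Integrable f μ) (hgi : Integrable (fun x => g (f x)) μ) :
    g (∫ x, f x ∂μ) ≤ ∫ x, g (f x) ∂μ := by
  set m := ∫ x, f x ∂μ with hm
  have hdeg : f =ᵐ[μ] (fun _ => m) → g m ≤ ∫ x, g (f x) ∂μ := by
    intro hconst
    have h : ∫ x, g (f x) ∂μ = g m := by
      rw [integral_congr_ae (hconst.mono fun x hx => by rw [hx])]
      simp
    rw [h]
  by_cases hub : ∃ b ∈ s, m < b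
  · by_cases hlb : ∃ a ∈ s, a < m
    · obtain ⟨b, hbs, hmb⟩ := hub
      obtain ⟨a, has, ham⟩ := hlb
      set S : Set ℝ := (fun x => (g m - g x) / (m - x)) '' (s ∩ Iio m) with hS
      have hSne : S.Nonempty := ⟨_, ⟨a, ⟨has, ham⟩, rfl⟩⟩
      have hSbdd : ∀ y ∈ S, y ≤ (g b - g m) / (b - m) := by
        rintro _ ⟨x, ⟨hxs, hxm⟩, rfl⟩
        exact hg.slope_mono_adjacent hxs hbs hxm hmb
      set c := sSup S with hc
      have key : ∀ y ∈ s, g m + c * (y - m) ≤ g y := by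
        intro y hys
        rcases lt_trichotomy y m with h | h | h
        · have h1 : (g m - g y) / (m - y) ≤ c :=
            le_csSup ⟨_, hSbdd⟩ ⟨y, ⟨hys, h⟩, rfl⟩
          rw [div_le_iff₀ (by linarith)] at h1
          nlinarith
        · simp [h]
        · have h2 : c ≤ (g y - g m) / (y - m) := by
            refine csSup_le hSne ?_
            rintro _ ⟨x, ⟨hxs, hxm⟩, rfl⟩
            exact hg.slope_mono_adjacent hxs hys hxm h
          rw [le_div_iff₀ (by linarith)] at h2
          nlinarith
      have hae : ∀ᵐ x ∂μ, g m + c * (f x - m) ≤ g (f x) :=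
        hfs.mono fun x hx => key _ hx
      have hmul : Integrable (fun x => c * (f x - m)) μ := by
        exact (hfi.sub (integrable_const m)).const_mul c
      have hint : Integrable (fun x => g m + c * (f x - m)) μ := by
        exact (integrable_const _).add hmul
      calc g m = ∫ x, (g m + c * (f x - m)) ∂μ := by
              rw [integral_add (integrable_const _) hmul, integral_const, integral_const_mul,
                integral_sub hfi (integrable_const m), integral_const]
              simp [← hm]
        _ ≤ ∫ x, g (f x) ∂μ := integral_mono_ae hint hgi hae
    · push_neg at hlb
      have hge : ∀ᵐ x ∂μ, m ≤ f x := hfs.mono fun x hx => hlb _ hx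
      have hsub : Integrable (fun x => f x - m) μ := by
        exact hfi.sub (integrable_const m)
      have h0 : ∫ x, (f x - m) ∂μ = 0 := by
        rw [integral_sub hfi (integrable_const m), integral_const]
        simp [← hm]
      have hz : (fun x => f x - m) =ᵐ[μ] 0 :=
        (integral_eq_zero_iff_of_nonneg_ae
          (hge.mono fun x hx => sub_nonneg.2 hx) hsub).mp h0
      exact hdeg (hz.mono fun x hx => by
        have h := hx; simp only [Pi.zero_apply] at h; linarith [sub_eq_zero.mp h])
  · push_neg at hub
    have hle : ∀ᵐ x ∂μ, f x ≤ m := hfs.mono fun x hx => hub _ hx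
    have hsub : Integrable (fun x => m - f x) μ := by
      exact (integrable_const m).sub hfi
    have h0 : ∫ x, (m - f x) ∂μ = 0 := by
      rw [integral_sub (integrable_const m) hfi, integral_const]
      simp [← hm]
    have hz : (fun x => m - f x) =ᵐ[μ] 0 :=
      (integral_eq_zero_iff_of_nonneg_ae
        (hle.mono fun x hx => sub_nonneg.2 hx) hsub).mp h0
    exact hdeg (hz.mono fun x hx => by
      have h := hx; simp only [Pi.zero_apply] at h; linarith [sub_eq_zero.mp h])

/-- **conditional Jensen inequality.** Let `L ⊆ ℝ` be an interval,
`g : L × L → ℝ` continuous and convex in its first argument for every fixed second argument in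
`L`, `V` a random variable, and `τ` a measurable `L`-valued function on the range of `V`.
If `U` is an integrable `L`-valued random variable with `g(U, τ(V))` integrable, then a.e.
`E[g(U, τ(V)) ∥ σ(V)] ≥ g(E[U ∥ σ(V)], τ(V))`. -/
theorem conditional_jensen
    {Ω : Type*} [MeasurableSpace Ω] (P : Measure Ω) [IsProbabilityMeasure P]
    {β : Type*} [mβ : MeasurableSpace β]
    (L : Set ℝ) (hL : L.OrdConnected)
    (g : ℝ → ℝ → ℝ)
    (hgcont : ContinuousOn (fun p : ℝ × ℝ => g p.1 p.2) (L ×ˢ L))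
    (hgconv : ∀ t ∈ L, ConvexOn ℝ L (fun x => g x t))
    (V : Ω → β) (hV : Measurable V)
    (τ : β → ℝ) (hτ : Measurable τ) (hτL : ∀ b, τ b ∈ L)
    (U : Ω → ℝ) (hUint : Integrable U P) (hUL : ∀ ω, U ω ∈ L)
    (hgint : Integrable (fun ω => g (U ω) (τ (V ω))) P) :
    ∀ᵐ ω ∂P,
      g ((P[U | MeasurableSpace.comap V mβ]) ω) (τ (V ω))
        ≤ (P[(fun ω' => g (U ω') (τ (V ω'))) | MeasurableSpace.comap V mβ]) ω := by
  classical
  have hLmeas : MeasurableSet L := hL.measurableSet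
  have hΩ : Nonempty Ω := by
    by_contra h
    rw [not_nonempty_iff] at h
    have h1 : P Set.univ = 1 := measure_univ
    rw [Set.univ_eq_empty_iff.mpr h, measure_empty] at h1
    exact zero_ne_one h1
  obtain ⟨l0, hl0⟩ : ∃ x, x ∈ L := ⟨U (Classical.arbitrary Ω), hUL _⟩
  have hU : AEMeasurable U P := hUint.1.aemeasurable
  have hVU : AEMeasurable (fun ω => (V ω, U ω)) P := hV.aemeasurable.prodMk hU
  set κ := condDistrib U V P with hκ
  -- measurable version of g ∘ (proj, τ)
  set proj : ℝ → ℝ := fun y => if y ∈ L then y else l0 with hproj_def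
  have hproj : Measurable proj := Measurable.ite hLmeas measurable_id measurable_const
  have hprojL : ∀ y, proj y ∈ L := fun y => by
    by_cases h : y ∈ L <;> simp [hproj_def, h, hl0]
  have hprojL' : ∀ y ∈ L, proj y = y := fun y hy => if_pos hy
  set f' : β × ℝ → ℝ := fun p => g (proj p.2) (τ p.1) with hf'_def
  have hf'meas : Measurable f' := by
    have hsub : Measurable
        (fun p : β × ℝ => (⟨(proj p.2, τ p.1), hprojL _, hτL _⟩ : (L ×ˢ L : Set (ℝ × ℝ)))) :=
      Measurable.subtype_mk ((hproj.comp measurable_snd).prodMk (hτ.comp measurable_fst))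
    have hgc : Continuous fun q : (L ×ˢ L : Set (ℝ × ℝ)) => g q.1.1 q.1.2 :=
      hgcont.restrict
    exact hgc.measurable.comp hsub
  have hgU_eq : ∀ ω, f' (V ω, U ω) = g (U ω) (τ (V ω)) := fun ω => by
    simp [hf'_def, hprojL' _ (hUL ω)]
  have hf'int : Integrable f' (P.map fun ω => (V ω, U ω)) := by
    rw [integrable_map_measure hf'meas.aestronglyMeasurable hVU]
    exact hgint.congr (Filter.Eventually.of_forall fun ω => (hgU_eq ω).symm)
  -- conditional expectations as kernel integrals
  have hb : P[(fun ω' => g (U ω') (τ (V ω'))) | MeasurableSpace.comap V mβ]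
      =ᵐ[P] fun ω => ∫ y, f' (V ω, y) ∂κ (V ω) := by
    have := condExp_prod_ae_eq_integral_condDistrib' (μ := P) hV hU hf'int
    have heq : (fun ω => f' (V ω, U ω)) = fun ω' => g (U ω') (τ (V ω')) := funext hgU_eq
    rwa [heq] at this
  have ha : P[U | MeasurableSpace.comap V mβ] =ᵐ[P] fun ω => ∫ y, y ∂κ (V ω) :=
    condExp_ae_eq_integral_condDistrib' hV hUint
  -- a.e. the kernel is supported on L
  have hcondL : ∀ᵐ ω ∂P, ∀ᵐ y ∂κ (V ω), y ∈ L := by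
    have hmapL : ∀ᵐ p ∂(P.map fun ω => (V ω, U ω)), p.2 ∈ L := by
      rw [ae_map_iff hVU (measurable_snd hLmeas)]
      exact Filter.Eventually.of_forall fun ω => hUL ω
    have hdis := (P.map fun ω => (V ω, U ω)).disintegrate (P.map fun ω => (V ω, U ω)).condKernel
    rw [← hdis] at hmapL
    have h2 := Measure.ae_ae_of_ae_compProd hmapL
    rw [Measure.fst_map_prodMk₀ hU] at h2
    have h3 := ae_of_ae_map hV.aemeasurable h2
    refine h3.mono fun ω hω => ?_
    rwa [hκ, condDistrib_def]
  -- a.e. integrability under the kernel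
  have hUid : Integrable (fun p : β × ℝ => p.2) (P.map fun ω => (V ω, U ω)) := by
    rw [integrable_map_measure measurable_snd.aestronglyMeasurable hVU]
    exact hUint
  have hintid : ∀ᵐ ω ∂P, Integrable (fun y => y) (κ (V ω)) := by
    have := hUid.condDistrib_ae (μ := P) hV.aemeasurable hU
    exact this
  have hintf' : ∀ᵐ ω ∂P, Integrable (fun y => f' (V ω, y)) (κ (V ω)) :=
    hf'int.condDistrib_ae (μ := P) hV.aemeasurable hU
  filter_upwards [ha, hb, hcondL, hintid, hintf'] with ω hUeq hgeq hyL hid hif'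
  rw [hUeq, hgeq]
  haveI : IsProbabilityMeasure (κ (V ω)) := inferInstance
  have heqint : ∫ y, f' (V ω, y) ∂κ (V ω) = ∫ y, g y (τ (V ω)) ∂κ (V ω) :=
    integral_congr_ae (hyL.mono fun y hy => by simp [hf'_def, hprojL' _ hy])
  rw [heqint]
  have hif'' : Integrable (fun y => g y (τ (V ω))) (κ (V ω)) :=
    hif'.congr (hyL.mono fun y hy => by simp [hf'_def, hprojL' _ hy])
  have := jensen_ordConnected hL (hgconv _ (hτL (V ω))) hyL hid hif''
  simpa using this
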